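/- Let R ⊆ (𝕋ⁿ)² be a signed bend cone and define C = R ⊕ Δⁿ, i.e., the set of all pairs (x⁺ ⊕ c, x⁻ ⊕ c) with (x⁺,x⁻) ∈ R and c ∈ 𝕋ⁿ (⊕ denoting componentwise max). Then C is a monotone pre-congruence. -/

import Mathlib

/-- The tropical (max-plus) semiring 𝕋 = ℝ ∪ {−∞}, modeled as `WithBot ℝ`. -/
abbrev Trop : Type := WithBot ℝ

/-- The map 𝕋 → ℝ, x ↦ eˣ (with e^{−∞} = 0), inducing the metric
d(x,y) = |eˣ − e^y| on 𝕋. -/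
noncomputable def tropExp : Trop → ℝ := WithBot.recBotCoe (0 : ℝ) Real.exp

/-- The topology on 𝕋 induced by the metric d(x,y) = |eˣ − e^y|. -/
noncomputable instance : TopologicalSpace Trop :=
  TopologicalSpace.induced tropExp inferInstance

/-- A pair of vectors (x⁺, x⁻) ∈ (𝕋ⁿ)² is signed if, for every coordinate i,
x⁺_i = −∞ or x⁻_i = −∞. -/
def SignedVecPair {n : ℕ} (x : (Fin n → Trop) × (Fin n → Trop)) : Prop :=
  ∀ i, x.1 i = ⊥ ∨ x.2 i = ⊥

/-- Tropical scalar product of vectors: ⟨x,y⟩ = max_i (x_i + y_i). -/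
noncomputable def tdot {n : ℕ} (x y : Fin n → Trop) : Trop :=
  Finset.univ.sup fun i => x i + y i

/-- The "signed part" f^∨ of a pair of vectors f = (f⁺, f⁻):
f^{∨+}_i = f⁺_i if f⁺_i ≥ f⁻_i and −∞ otherwise;
f^{∨−}_i = f⁻_i if f⁻_i > f⁺_i and −∞ otherwise. -/
noncomputable def vee {n : ℕ} (f : (Fin n → Trop) × (Fin n → Trop)) :
    (Fin n → Trop) × (Fin n → Trop) :=
  (fun i => if f.2 i ≤ f.1 i then f.1 i else ⊥,
   fun i => if f.1 i < f.2 i then f.2 i else ⊥)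

/-- Tropical scalar action: (λ ⊙ f)_i = λ + f_i. -/
noncomputable def tsmul {n : ℕ} (l : Trop) (f : Fin n → Trop) : Fin n → Trop :=
  fun i => l + f i

/-- A monotone pre-congruence C ⊆ (𝕋ⁿ)²: stable by tropical scalar multiplication,
by componentwise max, by "transitivity" (f⁻ = g⁺ implies (f⁺,g⁻) ∈ C), and containing
every pair (f⁺,f⁻) with f⁺ ≥ f⁻. -/
structure IsMonotonePrecongruence {n : ℕ} (C : Set ((Fin n → Trop) × (Fin n → Trop))) : Prop where
  smul_mem : ∀ f ∈ C, ∀ l : Trop, (tsmul l f.1, tsmul l f.2) ∈ C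
  add_mem : ∀ f ∈ C, ∀ g ∈ C, (f.1 ⊔ g.1, f.2 ⊔ g.2) ∈ C
  trans_mem : ∀ f ∈ C, ∀ g ∈ C, f.2 = g.1 → (f.1, g.2) ∈ C
  monotone_mem : ∀ f : (Fin n → Trop) × (Fin n → Trop), f.2 ≤ f.1 → f ∈ C

/-- The pair x ⊕_i y = (x⁺ ⊕ y⁺_{∖i}, x⁻_{∖i} ⊕ y⁻), where z_{∖i} is z with
coordinate i replaced by −∞. -/
noncomputable def oplusI {n : ℕ} (i : Fin n)
    (x y : (Fin n → Trop) × (Fin n → Trop)) : (Fin n → Trop) × (Fin n → Trop) :=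
  (x.1 ⊔ Function.update y.1 i ⊥, Function.update x.2 i ⊥ ⊔ y.2)

/-- A signed bend cone R ⊆ (𝕋ⁿ)²: all elements are signed pairs, R contains all
pairs (x⁺, −∞), is stable by tropical scalar multiplication, and is stable under
the operations x, y ↦ (x ⊕ y)^∨ and x, y ↦ (x ⊕_i y)^∨ (the latter when x⁻_i = y⁺_i). -/
structure IsSignedBendCone {n : ℕ} (R : Set ((Fin n → Trop) × (Fin n → Trop))) : Prop where
  signed : ∀ x ∈ R, SignedVecPair x
  pos_mem : ∀ xp : Fin n → Trop, (xp, fun _ => (⊥ : Trop)) ∈ R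
  smul_mem : ∀ x ∈ R, ∀ l : Trop, (tsmul l x.1, tsmul l x.2) ∈ R
  add_vee_mem : ∀ x ∈ R, ∀ y ∈ R, vee (x.1 ⊔ y.1, x.2 ⊔ y.2) ∈ R
  addI_vee_mem : ∀ x ∈ R, ∀ y ∈ R, ∀ i : Fin n, x.2 i = y.1 i → vee (oplusI i x y) ∈ R

/-- The one-sided polar B^⊲ = {a ∈ 𝕋ⁿ : ⟨x⁺,a⟩ ≥ ⟨x⁻,a⟩ for all (x⁺,x⁻) ∈ B}. -/
def onePolar {n : ℕ} (B : Set ((Fin n → Trop) × (Fin n → Trop))) : Set (Fin n → Trop) :=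
  {a | ∀ x ∈ B, tdot x.2 a ≤ tdot x.1 a}

/-- The signed part C^∨ of a set C ⊆ (𝕋ⁿ)²: the signed pairs belonging to C. -/
def signedPart {n : ℕ} (C : Set ((Fin n → Trop) × (Fin n → Trop))) :
    Set ((Fin n → Trop) × (Fin n → Trop)) :=
  {x ∈ C | SignedVecPair x}

/-- The signed polar A° of A ⊆ 𝕋ⁿ : the set of signed pairs (x⁺,x⁻) with
⟨x⁺,a⟩ ≥ ⟨x⁻,a⟩ for all a ∈ A. -/
def signedPolar {n : ℕ} (A : Set (Fin n → Trop)) :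
    Set ((Fin n → Trop) × (Fin n → Trop)) :=
  {x | SignedVecPair x ∧ ∀ a ∈ A, tdot x.2 a ≤ tdot x.1 a}

section BendConeAux

variable {n : ℕ}

/-- The vector that is `v` at coordinate `i` and `⊥` elsewhere. -/
def kOnly (i : Fin n) (v : Trop) : Fin n → Trop := fun j => if j = i then v else ⊥

lemma signed_vee (f : (Fin n → Trop) × (Fin n → Trop)) : SignedVecPair (vee f) := by
  intro i
  by_cases h : f.2 i ≤ f.1 i
  · right; simp [vee, not_lt.2 h]
  · left; simp [vee, h]

lemma vee_of_signed {f : (Fin n → Trop) × (Fin n → Trop)} (hf : SignedVecPair f) :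
    vee f = f := by
  have h1 : (vee f).1 = f.1 := by
    funext i
    rcases hf i with h | h
    · by_cases h2 : f.2 i ≤ f.1 i
      · simp [vee, h2]
      · simp [vee, h2, h]
    · simp [vee, h, bot_le]
  have h2 : (vee f).2 = f.2 := by
    funext i
    rcases hf i with h | h
    · by_cases h2 : f.1 i < f.2 i
      · simp [vee, h2]
      · have h3 : f.2 i = ⊥ := by
          have h4 := not_lt.1 h2; rw [h] at h4; exact le_bot_iff.1 h4
        simp [vee, h2, h3]
    · simp [vee, h, not_lt.2 bot_le]
  exact Prod.ext h1 h2

lemma trop_add_sup (l p q : Trop) : l + (p ⊔ q) = (l + p) ⊔ (l + q) := by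
  rcases le_total p q with h | h
  · rw [sup_eq_right.2 h, sup_eq_right.2 (add_le_add_right h l)]
  · rw [sup_eq_left.2 h, sup_eq_left.2 (add_le_add_right h l)]

lemma veepos_sup_min (p q : Trop) : (if q ≤ p then p else ⊥) ⊔ (p ⊓ q) = p := by
  rcases le_or_gt q p with h | h
  · rw [if_pos h, inf_eq_right.2 h, sup_eq_left.2 h]
  · rw [if_neg (not_le.2 h), inf_eq_left.2 h.le, bot_sup_eq]

lemma veeneg_sup_min (p q : Trop) : (if p < q then q else ⊥) ⊔ (p ⊓ q) = q := by
  rcases le_or_gt q p with h | h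
  · rw [if_neg (not_lt.2 h), inf_eq_right.2 h, bot_sup_eq]
  · rw [if_pos h, inf_eq_left.2 h.le, sup_eq_left.2 h.le]

lemma slack_sup {p q a b : Trop} (hp : p ≤ a ∨ p < b) (hq : q ≤ a ∨ q < b) :
    p ⊔ q ≤ a ∨ p ⊔ q < b := by
  rcases hp with hp | hp <;> rcases hq with hq | hq
  · exact Or.inl (sup_le hp hq)
  · rcases le_or_gt b a with h | h
    · exact Or.inl (sup_le hp (hq.le.trans h))
    · exact Or.inr (sup_lt_iff.2 ⟨lt_of_le_of_lt hp h, hq⟩)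
  · rcases le_or_gt b a with h | h
    · exact Or.inl (sup_le (hp.le.trans h) hq)
    · exact Or.inr (sup_lt_iff.2 ⟨hp, lt_of_le_of_lt hq h⟩)
  · exact Or.inr (sup_lt_iff.2 ⟨hp, hq⟩)

variable {R : Set ((Fin n → Trop) × (Fin n → Trop))}

/-- From a signed element of a bend cone we may delete one coordinate of the
negative part. -/
lemma drop_mem (hR : IsSignedBendCone R)
    {x : (Fin n → Trop) × (Fin n → Trop)} (hx : x ∈ R) (hsx : SignedVecPair x)
    (i : Fin n) : (x.1, Function.update x.2 i ⊥) ∈ R := by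
  classical
  set y : (Fin n → Trop) × (Fin n → Trop) :=
    (Function.update (fun _ => (⊥ : Trop)) i (x.2 i), fun _ => (⊥ : Trop)) with hy_def
  have hy : y ∈ R := hR.pos_mem _
  have hcond : x.2 i = y.1 i := by simp [hy_def]
  have h := hR.addI_vee_mem x hx y hy i hcond
  have heq : oplusI i x y = (x.1, Function.update x.2 i ⊥) := by
    apply Prod.ext
    · funext j
      show x.1 j ⊔ Function.update y.1 i ⊥ j = x.1 j
      rcases eq_or_ne j i with rfl | hji
      · simp
      · simp [hy_def, Function.update_apply, hji]
    · funext j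
      show Function.update x.2 i ⊥ j ⊔ (⊥ : Trop) = Function.update x.2 i ⊥ j
      simp
  have hs : SignedVecPair (x.1, Function.update x.2 i ⊥) := by
    intro j
    rcases hsx j with hj | hj
    · exact Or.inl hj
    · right; simp [Function.update_apply, hj]
  rw [heq, vee_of_signed hs] at h
  exact h

lemma dropSet_mem (hR : IsSignedBendCone R)
    {x : (Fin n → Trop) × (Fin n → Trop)} (hx : x ∈ R) (hsx : SignedVecPair x)
    (T : Finset (Fin n)) :
    (x.1, fun j => if j ∈ T then ⊥ else x.2 j) ∈ R := by
  classical
  induction T using Finset.induction_on with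
  | empty => simpa using hx
  | @insert k T₀ hk ih =>
    have hsu : SignedVecPair (x.1, fun j => if j ∈ T₀ then ⊥ else x.2 j) := by
      intro j
      rcases hsx j with hj | hj
      · exact Or.inl hj
      · right; show (if j ∈ T₀ then ⊥ else x.2 j) = ⊥; split <;> simp [hj]
    have h := drop_mem hR ih hsu k
    have heq : Function.update (fun j => if j ∈ T₀ then (⊥ : Trop) else x.2 j) k ⊥
        = fun j => if j ∈ insert k T₀ then (⊥ : Trop) else x.2 j := by
      funext j
      rw [Function.update_apply]
      rcases eq_or_ne j k with rfl | hjk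
      · simp
      · simp [hjk, Finset.mem_insert]
    rw [heq] at h
    exact h

/-- Keep only coordinate `i` of the negative part. -/
lemma keep_mem (hR : IsSignedBendCone R)
    {x : (Fin n → Trop) × (Fin n → Trop)} (hx : x ∈ R) (hsx : SignedVecPair x)
    (i : Fin n) : (x.1, kOnly i (x.2 i)) ∈ R := by
  classical
  have h := dropSet_mem hR hx hsx (Finset.univ.erase i)
  have heq : (fun j => if j ∈ Finset.univ.erase i then (⊥ : Trop) else x.2 j)
      = kOnly i (x.2 i) := by
    funext j
    rcases eq_or_ne j i with rfl | hji
    · simp [kOnly]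
    · simp [kOnly, hji]
  rw [heq] at h
  exact h

end BendConeAux
section BendConeChain

variable {n : ℕ} {R : Set ((Fin n → Trop) × (Fin n → Trop))}

lemma chain_lemma (hR : IsSignedBendCone R)
    {x : (Fin n → Trop) × (Fin n → Trop)} (hx : x ∈ R) (hsx : SignedVecPair x)
    (i : Fin n) (β : Trop) (hx2i : x.2 i ≤ β) (hx1i : x.1 i < β) :
    ∀ T : Finset (Fin n), (∀ j ∈ T, x.1 j = ⊥) → i ∉ T →
    ∀ u ∈ R, SignedVecPair u → u.2 = kOnly i β → u.1 i < β →
      (∀ j ∈ T, u.1 j = x.2 j ∨ u.1 j = ⊥) →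
      ∃ v ∈ R, SignedVecPair v ∧ v.2 = kOnly i β ∧ v.1 i < β ∧
        (∀ j ∈ T, v.1 j = ⊥) ∧ (∀ j, v.1 j ≤ x.1 j ⊔ u.1 j) := by
  classical
  intro T
  induction T using Finset.induction_on with
  | empty =>
    intro _ _ u hu hsu hu2 hui _
    exact ⟨u, hu, hsu, hu2, hui, by simp, fun j => le_sup_right⟩
  | @insert k T₀ hk ih =>
    intro hT1 hiT u hu hsu hu2 hui hTu
    have hxk : x.1 k = ⊥ := hT1 k (Finset.mem_insert_self k T₀)
    have hik : i ≠ k := fun h => hiT (h ▸ Finset.mem_insert_self k T₀)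
    have hT1' : ∀ j ∈ T₀, x.1 j = ⊥ := fun j hj => hT1 j (Finset.mem_insert_of_mem hj)
    have hiT' : i ∉ T₀ := fun h => hiT (Finset.mem_insert_of_mem h)
    by_cases hbot : u.1 k = ⊥
    · obtain ⟨v, hv, hsv, hv2, hvi, hvT, hvle⟩ :=
        ih hT1' hiT' u hu hsu hu2 hui (fun j hj => hTu j (Finset.mem_insert_of_mem hj))
      refine ⟨v, hv, hsv, hv2, hvi, ?_, hvle⟩
      intro j hj
      rcases Finset.mem_insert.1 hj with rfl | hj'
      · have h := hvle j
        rw [hxk, hbot] at h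
        simpa using h
      · exact hvT j hj'
    · have hcond : x.2 k = u.1 k :=
        ((hTu k (Finset.mem_insert_self k T₀)).resolve_right hbot).symm
      have hwR : vee (oplusI k x u) ∈ R := hR.addI_vee_mem x hx u hu k hcond
      set w := vee (oplusI k x u) with hwdef
      have hsw : SignedVecPair w := signed_vee _
      have hu2i : u.2 i = β := by rw [hu2]; simp [kOnly]
      have hu2k : u.2 k = ⊥ := by rw [hu2]; simp [kOnly, Ne.symm hik]
      have hop1 : ∀ j, (oplusI k x u).1 j = x.1 j ⊔ Function.update u.1 k ⊥ j :=
        fun _ => rfl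
      have hop2 : ∀ j, (oplusI k x u).2 j = Function.update x.2 k ⊥ j ⊔ u.2 j :=
        fun _ => rfl
      have hvee1 : ∀ j, w.1 j = if (oplusI k x u).2 j ≤ (oplusI k x u).1 j
          then (oplusI k x u).1 j else ⊥ := fun _ => rfl
      have hvee2 : ∀ j, w.2 j = if (oplusI k x u).1 j < (oplusI k x u).2 j
          then (oplusI k x u).2 j else ⊥ := fun _ => rfl
      have hβbot : (⊥ : Trop) < β := lt_of_le_of_lt bot_le hui
      have hPi : (oplusI k x u).1 i = x.1 i ⊔ u.1 i := by
        rw [hop1 i, Function.update_of_ne hik]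
      have hNi : (oplusI k x u).2 i = β := by
        rw [hop2 i, Function.update_of_ne hik, hu2i]
        exact sup_eq_right.2 hx2i
      have hPilt : (oplusI k x u).1 i < β := by
        rw [hPi]; exact sup_lt_iff.2 ⟨hx1i, hui⟩
      have hw2i : w.2 i = β := by
        rw [hvee2 i, hNi, if_pos hPilt]
      have hw1i : w.1 i = ⊥ := by
        rw [hvee1 i, hNi, if_neg (not_le.2 hPilt)]
      have hPk : (oplusI k x u).1 k = ⊥ := by
        rw [hop1 k, Function.update_self, hxk]; simp
      have hNk : (oplusI k x u).2 k = ⊥ := by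
        rw [hop2 k, Function.update_self, hu2k]; simp
      have hw1k : w.1 k = ⊥ := by rw [hvee1 k, hPk, ite_self]
      have hwle : ∀ j, w.1 j ≤ x.1 j ⊔ u.1 j := by
        intro j
        rw [hvee1 j]
        split
        · rw [hop1 j]
          refine sup_le_sup_left ?_ _
          rw [Function.update_apply]
          split
          · exact bot_le
          · exact le_rfl
        · exact bot_le
      have hwT₀ : ∀ j ∈ T₀, w.1 j = x.2 j ∨ w.1 j = ⊥ := by
        intro j hj
        have hxj : x.1 j = ⊥ := hT1' j hj
        have hjk : j ≠ k := fun h => hk (h ▸ hj)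
        have hPj : (oplusI k x u).1 j = u.1 j := by
          rw [hop1 j, Function.update_of_ne hjk, hxj, bot_sup_eq]
        rcases hTu j (Finset.mem_insert_of_mem hj) with h | h
        · rw [hvee1 j, hPj, h]
          split
          · exact Or.inl rfl
          · exact Or.inr rfl
        · right; rw [hvee1 j, hPj, h, ite_self]
      have hw'R : (w.1, kOnly i (w.2 i)) ∈ R := keep_mem hR hwR hsw i
      rw [hw2i] at hw'R
      have hsw' : SignedVecPair (w.1, kOnly i β) := by
        intro j
        rcases eq_or_ne j i with rfl | hji
        · exact Or.inl hw1i
        · right; simp [kOnly, hji]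
      obtain ⟨v, hvR, hsv, hv2, hvi, hvT, hvle⟩ :=
        ih hT1' hiT' (w.1, kOnly i β) hw'R hsw' rfl
          (by show w.1 i < β; rw [hw1i]; exact hβbot) hwT₀
      refine ⟨v, hvR, hsv, hv2, hvi, ?_, ?_⟩
      · intro j hj
        rcases Finset.mem_insert.1 hj with rfl | hj'
        · have h := hvle j
          rw [hxk] at h
          have h2 : v.1 j ≤ w.1 j := by simpa using h
          rw [hw1k] at h2
          exact le_bot_iff.1 h2
        · exact hvT j hj'
      · intro j
        have h := hvle j
        have h2 := hwle j
        calc v.1 j ≤ x.1 j ⊔ w.1 j := h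
          _ ≤ x.1 j ⊔ (x.1 j ⊔ u.1 j) := sup_le_sup_left h2 _
          _ = x.1 j ⊔ u.1 j := by rw [← sup_assoc, sup_idem]

end BendConeChain
section BendConePerCoord

variable {n : ℕ} {R : Set ((Fin n → Trop) × (Fin n → Trop))}

lemma perCoord (hR : IsSignedBendCone R)
    {x y : (Fin n → Trop) × (Fin n → Trop)} (hx : x ∈ R) (hy : y ∈ R)
    (c d : Fin n → Trop) (hm : ∀ j, x.2 j ⊔ c j = y.1 j ⊔ d j) (i : Fin n)
    (hi : x.1 i ⊔ c i < y.2 i ⊔ d i) :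
    ∃ u ∈ R, u.2 = kOnly i (y.2 i ⊔ d i) ∧
      ∀ j, u.1 j ≤ x.1 j ⊔ c j ∨ u.1 j < y.2 j ⊔ d j := by
  classical
  have hsx := hR.signed x hx
  have hsy := hR.signed y hy
  by_cases hcase : d i ≤ y.2 i
  · -- the needed negative value is y.2 i
    have hbi : y.2 i ⊔ d i = y.2 i := sup_eq_left.2 hcase
    rw [hbi] at hi
    have hβbot : (⊥ : Trop) < y.2 i := lt_of_le_of_lt bot_le hi
    have hy1i : y.1 i = ⊥ := (hsy i).resolve_right hβbot.ne'
    have hx2i : x.2 i ≤ y.2 i := by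
      have h1 : x.2 i ≤ x.2 i ⊔ c i := le_sup_left
      rw [hm i, hy1i, bot_sup_eq] at h1
      exact h1.trans hcase
    have hx1i : x.1 i < y.2 i := lt_of_le_of_lt le_sup_left hi
    set T : Finset (Fin n) :=
      Finset.univ.filter (fun j => x.2 j = y.1 j ∧ y.1 j ≠ ⊥) with hTdef
    have hT1 : ∀ j ∈ T, x.1 j = ⊥ := by
      intro j hj
      obtain ⟨-, h1, h2⟩ := Finset.mem_filter.1 hj
      exact (hsx j).resolve_right (by rw [h1]; exact h2)
    have hiT : i ∉ T := by
      intro h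
      exact (Finset.mem_filter.1 h).2.2 hy1i
    have hu0R : (y.1, kOnly i (y.2 i)) ∈ R := keep_mem hR hy hsy i
    have hsu0 : SignedVecPair (y.1, kOnly i (y.2 i)) := by
      intro j
      rcases eq_or_ne j i with rfl | hji
      · exact Or.inl hy1i
      · right; simp [kOnly, hji]
    obtain ⟨v, hvR, hsv, hv2, hvi, hvT, hvle⟩ :=
      chain_lemma hR hx hsx i (y.2 i) hx2i hx1i T hT1 hiT (y.1, kOnly i (y.2 i))
        hu0R hsu0 rfl (by show y.1 i < y.2 i; rw [hy1i]; exact hβbot)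
        (fun j hj => Or.inl ((Finset.mem_filter.1 hj).2.1).symm)
    refine ⟨v, hvR, by rw [hbi]; exact hv2, ?_⟩
    intro j
    by_cases hjT : j ∈ T
    · left; rw [hvT j hjT]; exact bot_le
    · have hb : v.1 j ≤ x.1 j ⊔ y.1 j := hvle j
      by_cases hya : y.1 j ≤ x.1 j ⊔ c j
      · left; exact hb.trans (sup_le le_sup_left hya)
      · right
        push_neg at hya
        have hyb : y.1 j < y.2 j ⊔ d j := by
          by_contra hcon
          push_neg at hcon
          have hcj : c j < y.1 j := lt_of_le_of_lt le_sup_right hya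
          have h1 : y.1 j ≤ x.2 j ⊔ c j := by rw [hm j]; exact le_sup_left
          have h2 : y.1 j ≤ x.2 j := by
            rcases le_sup_iff.1 h1 with h | h
            · exact h
            · exact absurd h (not_le.2 hcj)
          have hd : d j ≤ y.1 j := le_trans le_sup_right hcon
          have h3 : x.2 j ≤ y.1 j := by
            have h4 : x.2 j ≤ x.2 j ⊔ c j := le_sup_left
            rw [hm j] at h4
            exact h4.trans (sup_le le_rfl hd)
          have hne : y.1 j ≠ ⊥ := (lt_of_le_of_lt bot_le hya).ne'
          exact hjT (Finset.mem_filter.2 ⟨Finset.mem_univ j, le_antisymm h3 h2, hne⟩)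
        have hxj : x.1 j < y.2 j ⊔ d j := lt_of_le_of_lt le_sup_left (lt_trans hya hyb)
        exact lt_of_le_of_lt hb (sup_lt_iff.2 ⟨hxj, hyb⟩)
  · -- the needed negative value is d i; scale x down
    push_neg at hcase
    have hbi : y.2 i ⊔ d i = d i := sup_eq_right.2 hcase.le
    rw [hbi] at hi
    have hci : c i < d i := lt_of_le_of_lt le_sup_right hi
    have hdx : d i ≤ x.2 i := by
      have h1 : d i ≤ x.2 i ⊔ c i := by rw [hm i]; exact le_sup_right
      rcases le_sup_iff.1 h1 with h | h
      · exact h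
      · exact absurd h (not_le.2 hci)
    have hdbot : d i ≠ ⊥ := (lt_of_le_of_lt bot_le hi).ne'
    have hx2bot : x.2 i ≠ ⊥ := fun h => hdbot (le_bot_iff.1 (h ▸ hdx))
    obtain ⟨r, hr⟩ := WithBot.ne_bot_iff_exists.1 hdbot
    obtain ⟨s, hs⟩ := WithBot.ne_bot_iff_exists.1 hx2bot
    set l : Trop := ((r - s : ℝ) : Trop) with hl_def
    have hl : l + x.2 i = d i := by
      rw [← hs, ← hr, hl_def, ← WithBot.coe_add, sub_add_cancel]
    have hl0 : l ≤ (0 : Trop) := by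
      have hrs : r ≤ s := by
        have h5 := hdx; rw [← hr, ← hs] at h5; exact_mod_cast h5
      rw [hl_def]
      exact_mod_cast sub_nonpos.2 hrs
    have hu' : (tsmul l x.1, tsmul l x.2) ∈ R := hR.smul_mem x hx l
    have hsu' : SignedVecPair (tsmul l x.1, tsmul l x.2) := by
      intro j
      rcases hsx j with h | h
      · left; show l + x.1 j = ⊥; rw [h]; simp
      · right; show l + x.2 j = ⊥; rw [h]; simp
    have huR := keep_mem hR hu' hsu' i
    refine ⟨_, huR, ?_, ?_⟩
    · show kOnly i (tsmul l x.2 i) = kOnly i (y.2 i ⊔ d i)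
      rw [hbi]
      rw [show (tsmul l x.2 i : Trop) = d i from hl]
    · intro j
      left
      show l + x.1 j ≤ x.1 j ⊔ c j
      calc l + x.1 j ≤ 0 + x.1 j := add_le_add_left hl0 _
        _ = x.1 j := zero_add _
        _ ≤ x.1 j ⊔ c j := le_sup_left

end BendConePerCoord
section BendConeCombine

variable {n : ℕ} {R : Set ((Fin n → Trop) × (Fin n → Trop))}

lemma combine_lemma (hR : IsSignedBendCone R)
    {x y : (Fin n → Trop) × (Fin n → Trop)} (hx : x ∈ R) (hy : y ∈ R)
    (c d : Fin n → Trop) (hm : ∀ j, x.2 j ⊔ c j = y.1 j ⊔ d j) :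
    ∀ T : Finset (Fin n), (∀ i ∈ T, x.1 i ⊔ c i < y.2 i ⊔ d i) →
      ∃ w ∈ R,
        (∀ j ∈ T, w.1 j = ⊥ ∧ w.2 j = y.2 j ⊔ d j) ∧
        (∀ j ∉ T, w.2 j = ⊥ ∧ x.1 j ⊔ c j ≤ w.1 j ∧
          (w.1 j ≤ x.1 j ⊔ c j ∨ w.1 j < y.2 j ⊔ d j)) := by
  classical
  intro T
  induction T using Finset.induction_on with
  | empty =>
    intro _
    refine ⟨(fun j => x.1 j ⊔ c j, fun _ => ⊥), hR.pos_mem _, by simp, ?_⟩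
    intro j _
    exact ⟨rfl, le_rfl, Or.inl le_rfl⟩
  | @insert i T₀ hiT ih =>
    intro hT
    obtain ⟨w₀, hw₀R, hw₀T, hw₀nT⟩ := ih (fun j hj => hT j (Finset.mem_insert_of_mem hj))
    have hi : x.1 i ⊔ c i < y.2 i ⊔ d i := hT i (Finset.mem_insert_self i T₀)
    obtain ⟨u, huR, hu2, huslack⟩ := perCoord hR hx hy c d hm i hi
    have hwR : vee (w₀.1 ⊔ u.1, w₀.2 ⊔ u.2) ∈ R := hR.add_vee_mem w₀ hw₀R u huR
    set w := vee (w₀.1 ⊔ u.1, w₀.2 ⊔ u.2) with hwdef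
    have hvee1 : ∀ j, w.1 j = if w₀.2 j ⊔ u.2 j ≤ w₀.1 j ⊔ u.1 j
        then w₀.1 j ⊔ u.1 j else ⊥ := fun _ => rfl
    have hvee2 : ∀ j, w.2 j = if w₀.1 j ⊔ u.1 j < w₀.2 j ⊔ u.2 j
        then w₀.2 j ⊔ u.2 j else ⊥ := fun _ => rfl
    have hu2i : u.2 i = y.2 i ⊔ d i := by rw [hu2]; simp [kOnly]
    have hu2' : ∀ j, j ≠ i → u.2 j = ⊥ := by
      intro j hj; rw [hu2]; simp [kOnly, hj]
    refine ⟨w, hwR, ?_, ?_⟩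
    · intro j hj
      rcases Finset.mem_insert.1 hj with rfl | hj'
      · obtain ⟨h2, hge, hsl⟩ := hw₀nT j hiT
        have hN : w₀.2 j ⊔ u.2 j = y.2 j ⊔ d j := by rw [h2, hu2i, bot_sup_eq]
        have hP : w₀.1 j ⊔ u.1 j < y.2 j ⊔ d j := by
          apply sup_lt_iff.2
          constructor
          · rcases hsl with h | h
            · exact lt_of_le_of_lt h hi
            · exact h
          · rcases huslack j with h | h
            · exact lt_of_le_of_lt h hi
            · exact h
        exact ⟨by rw [hvee1 j, hN, if_neg (not_le.2 hP)],
          by rw [hvee2 j, hN, if_pos hP]⟩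
      · have hji : j ≠ i := fun h => hiT (h ▸ hj')
        obtain ⟨h1, h2⟩ := hw₀T j hj'
        have hN : w₀.2 j ⊔ u.2 j = y.2 j ⊔ d j := by rw [h2, hu2' j hji, sup_bot_eq]
        have hj2 : x.1 j ⊔ c j < y.2 j ⊔ d j := hT j (Finset.mem_insert_of_mem hj')
        have hP : w₀.1 j ⊔ u.1 j < y.2 j ⊔ d j := by
          apply sup_lt_iff.2
          constructor
          · rw [h1]; exact lt_of_le_of_lt bot_le hj2
          · rcases huslack j with h | h
            · exact lt_of_le_of_lt h hj2
            · exact h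
        exact ⟨by rw [hvee1 j, hN, if_neg (not_le.2 hP)],
          by rw [hvee2 j, hN, if_pos hP]⟩
    · intro j hj
      have hji : j ≠ i := fun h => hj (h ▸ Finset.mem_insert_self i T₀)
      have hjT₀ : j ∉ T₀ := fun h => hj (Finset.mem_insert_of_mem h)
      obtain ⟨h2, hge, hsl⟩ := hw₀nT j hjT₀
      have hN : w₀.2 j ⊔ u.2 j = ⊥ := by rw [h2, hu2' j hji, sup_bot_eq]
      refine ⟨?_, ?_, ?_⟩
      · rw [hvee2 j, hN, ite_self]
      · rw [hvee1 j, hN, if_pos bot_le]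
        exact le_trans hge le_sup_left
      · rw [hvee1 j, hN, if_pos bot_le]
        exact slack_sup hsl (huslack j)

end BendConeCombine
/-- If R is a signed bend cone then C = R ⊕ Δⁿ is a monotone pre-congruence. -/
theorem bendCone_oplus_diagonal_precongruence {n : ℕ}
    (R : Set ((Fin n → Trop) × (Fin n → Trop))) (hR : IsSignedBendCone R) :
    IsMonotonePrecongruence
      {h | ∃ x ∈ R, ∃ c : Fin n → Trop, h = (x.1 ⊔ c, x.2 ⊔ c)} := by
  classical
  constructor
  · -- smul_mem
    rintro f ⟨x, hx, c, rfl⟩ l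
    refine ⟨(tsmul l x.1, tsmul l x.2), hR.smul_mem x hx l, tsmul l c, ?_⟩
    have hdist : ∀ p q : Fin n → Trop, tsmul l (p ⊔ q) = tsmul l p ⊔ tsmul l q := by
      intro p q
      funext j
      show l + (p j ⊔ q j) = (l + p j) ⊔ (l + q j)
      exact trop_add_sup l (p j) (q j)
    show (tsmul l (x.1 ⊔ c), tsmul l (x.2 ⊔ c))
      = (tsmul l x.1 ⊔ tsmul l c, tsmul l x.2 ⊔ tsmul l c)
    rw [hdist, hdist]
  · -- add_mem
    rintro f ⟨x, hx, c, rfl⟩ g ⟨y, hy, d, rfl⟩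
    refine ⟨vee (x.1 ⊔ y.1, x.2 ⊔ y.2), hR.add_vee_mem x hx y hy,
      fun j => ((x.1 j ⊔ y.1 j) ⊓ (x.2 j ⊔ y.2 j)) ⊔ (c j ⊔ d j), ?_⟩
    have h1 : ∀ j, (vee (x.1 ⊔ y.1, x.2 ⊔ y.2)).1 j
        = if x.2 j ⊔ y.2 j ≤ x.1 j ⊔ y.1 j then x.1 j ⊔ y.1 j else ⊥ := fun _ => rfl
    have h2 : ∀ j, (vee (x.1 ⊔ y.1, x.2 ⊔ y.2)).2 j
        = if x.1 j ⊔ y.1 j < x.2 j ⊔ y.2 j then x.2 j ⊔ y.2 j else ⊥ := fun _ => rfl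
    apply Prod.ext
    · funext j
      show (x.1 j ⊔ c j) ⊔ (y.1 j ⊔ d j)
        = (vee (x.1 ⊔ y.1, x.2 ⊔ y.2)).1 j
          ⊔ (((x.1 j ⊔ y.1 j) ⊓ (x.2 j ⊔ y.2 j)) ⊔ (c j ⊔ d j))
      rw [h1 j]
      conv_rhs => rw [← sup_assoc, veepos_sup_min]
      exact sup_sup_sup_comm (x.1 j) (c j) (y.1 j) (d j)
    · funext j
      show (x.2 j ⊔ c j) ⊔ (y.2 j ⊔ d j)
        = (vee (x.1 ⊔ y.1, x.2 ⊔ y.2)).2 j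
          ⊔ (((x.1 j ⊔ y.1 j) ⊓ (x.2 j ⊔ y.2 j)) ⊔ (c j ⊔ d j))
      rw [h2 j]
      conv_rhs => rw [← sup_assoc, veeneg_sup_min]
      exact sup_sup_sup_comm (x.2 j) (c j) (y.2 j) (d j)
  · -- trans_mem
    rintro f ⟨x, hx, c, rfl⟩ g ⟨y, hy, d, rfl⟩ hfg
    have hm : ∀ j, x.2 j ⊔ c j = y.1 j ⊔ d j := by
      intro j
      have h := congrFun hfg j
      exact h
    set T : Finset (Fin n) :=
      Finset.univ.filter (fun j => x.1 j ⊔ c j < y.2 j ⊔ d j) with hTdef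
    obtain ⟨w, hwR, hwT, hwnT⟩ :=
      combine_lemma hR hx hy c d hm T (fun i hi => (Finset.mem_filter.1 hi).2)
    refine ⟨w, hwR,
      fun j => if x.1 j ⊔ c j < y.2 j ⊔ d j then x.1 j ⊔ c j else y.2 j ⊔ d j, ?_⟩
    apply Prod.ext
    · funext j
      show x.1 j ⊔ c j
        = w.1 j ⊔ (if x.1 j ⊔ c j < y.2 j ⊔ d j then x.1 j ⊔ c j else y.2 j ⊔ d j)
      by_cases hj : x.1 j ⊔ c j < y.2 j ⊔ d j
      · have hmem : j ∈ T := Finset.mem_filter.2 ⟨Finset.mem_univ j, hj⟩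
        rw [if_pos hj, (hwT j hmem).1, bot_sup_eq]
      · have hmem : j ∉ T := fun h => hj (Finset.mem_filter.1 h).2
        obtain ⟨h2, hge, hsl⟩ := hwnT j hmem
        have hle : w.1 j ≤ x.1 j ⊔ c j := by
          rcases hsl with h | h
          · exact h
          · exact h.le.trans (not_lt.1 hj)
        rw [if_neg hj, le_antisymm hle hge, sup_eq_left.2 (not_lt.1 hj)]
    · funext j
      show y.2 j ⊔ d j
        = w.2 j ⊔ (if x.1 j ⊔ c j < y.2 j ⊔ d j then x.1 j ⊔ c j else y.2 j ⊔ d j)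
      by_cases hj : x.1 j ⊔ c j < y.2 j ⊔ d j
      · have hmem : j ∈ T := Finset.mem_filter.2 ⟨Finset.mem_univ j, hj⟩
        rw [if_pos hj, (hwT j hmem).2]
        exact (sup_eq_left.2 hj.le).symm
      · have hmem : j ∉ T := fun h => hj (Finset.mem_filter.1 h).2
        rw [if_neg hj, (hwnT j hmem).1, bot_sup_eq]
  · -- monotone_mem
    intro f hle
    refine ⟨(f.1, fun _ => ⊥), hR.pos_mem f.1, f.2, ?_⟩
    apply Prod.ext
    · exact (sup_eq_left.2 hle).symm
    · funext j
      show f.2 j = ⊥ ⊔ f.2 j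
      rw [bot_sup_eq]
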